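/- For every even n and every equivalence class of Turyn-type sequences TT(n), there is exactly one member of the class which is in canonical form. -/

import Mathlib

/-- A sequence is modeled as a function `ℤ → ℤ`. -/
abbrev BSeq : Type := ℤ → ℤ

/-- A quadruple of sequences. -/
abbrev SeqQuad : Type := BSeq × BSeq × BSeq × BSeq

/-- A binary (`±1`) sequence of length `n`: supported on `[1, n]`,
with values in `{1, -1}` there, and `0` outside. -/
def IsBinarySeq (n : ℕ) (a : BSeq) : Prop :=
  (∀ i : ℤ, 1 ≤ i → i ≤ (n : ℤ) → a i = 1 ∨ a i = -1) ∧
  (∀ i : ℤ, i < 1 ∨ (n : ℤ) < i → a i = 0)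

/-- The nonperiodic autocorrelation function `N_A(i) = Σ_{j ∈ ℤ} a_j a_{i+j}`. -/
noncomputable def NAC (a : BSeq) (i : ℤ) : ℤ := ∑ᶠ j : ℤ, a j * a (i + j)

/-- `(A; B; C; D)` is a Turyn-type sequence `TT(n)`: binary sequences of lengths
`n, n, n, n-1` with `N_A(i) + N_B(i) + 2N_C(i) + 2N_D(i) = 0` for all `i ≠ 0`. -/
def IsTT (n : ℕ) (A B C D : BSeq) : Prop :=
  IsBinarySeq n A ∧ IsBinarySeq n B ∧ IsBinarySeq n C ∧ IsBinarySeq (n - 1) D ∧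
  ∀ i : ℤ, i ≠ 0 → NAC A i + NAC B i + 2 * NAC C i + 2 * NAC D i = 0

/-- The negated sequence `-A`. -/
def negSeq (a : BSeq) : BSeq := fun i => -a i

/-- The reversed sequence `A'` of a sequence of length `n`. -/
def revSeq (n : ℕ) (a : BSeq) : BSeq := fun i => a ((n : ℤ) + 1 - i)

/-- The alternated sequence `A*`, whose `i`-th entry is `(-1)^(i-1) a_i`. -/
def altSeq (a : BSeq) : BSeq := fun i => if Even i then -a i else a i

/-- The elementary transformations of a quadruple `(A; B; C; D)` (with `A, B, C`
of length `n` and `D` of length `n-1`). -/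
inductive ElemStep (n : ℕ) : SeqQuad → SeqQuad → Prop
  | negA (A B C D : BSeq) : ElemStep n (A, B, C, D) (negSeq A, B, C, D)
  | negB (A B C D : BSeq) : ElemStep n (A, B, C, D) (A, negSeq B, C, D)
  | negC (A B C D : BSeq) : ElemStep n (A, B, C, D) (A, B, negSeq C, D)
  | negD (A B C D : BSeq) : ElemStep n (A, B, C, D) (A, B, C, negSeq D)
  | revA (A B C D : BSeq) : ElemStep n (A, B, C, D) (revSeq n A, B, C, D)
  | revB (A B C D : BSeq) : ElemStep n (A, B, C, D) (A, revSeq n B, C, D)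
  | revC (A B C D : BSeq) : ElemStep n (A, B, C, D) (A, B, revSeq n C, D)
  | revD (A B C D : BSeq) : ElemStep n (A, B, C, D) (A, B, C, revSeq (n - 1) D)
  | alt (A B C D : BSeq) : ElemStep n (A, B, C, D) (altSeq A, altSeq B, altSeq C, altSeq D)
  | swap (A B C D : BSeq) : ElemStep n (A, B, C, D) (B, A, C, D)

/-- Two quadruples are equivalent if one can be transformed into the other by a
finite sequence of elementary transformations. -/
def TTEquiv (n : ℕ) : SeqQuad → SeqQuad → Prop := Relation.ReflTransGen (ElemStep n)

/-- The canonical form of a Turyn-type sequence `TT(n)`. -/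
def IsCanonical (n : ℕ) (A B C D : BSeq) : Prop :=
  -- (i)
  (A 1 = 1 ∧ A (n : ℤ) = 1 ∧ B 1 = 1 ∧ B (n : ℤ) = 1 ∧ C 1 = 1 ∧
    (2 ≤ n → D 1 = 1)) ∧
  -- (ii)
  (∀ i : ℤ, 1 ≤ i → i ≤ (n : ℤ) → A i ≠ A ((n : ℤ) + 1 - i) →
    (∀ j : ℤ, 1 ≤ j → j < i → A j = A ((n : ℤ) + 1 - j)) → A i = 1) ∧
  -- (iii)
  (∀ i : ℤ, 1 ≤ i → i ≤ (n : ℤ) → B i ≠ B ((n : ℤ) + 1 - i) →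
    (∀ j : ℤ, 1 ≤ j → j < i → B j = B ((n : ℤ) + 1 - j)) → B i = 1) ∧
  -- (iv)
  (∀ i : ℤ, 1 ≤ i → i ≤ (n : ℤ) → C i = C ((n : ℤ) + 1 - i) →
    (∀ j : ℤ, 1 ≤ j → j < i → C j ≠ C ((n : ℤ) + 1 - j)) → C i = 1) ∧
  -- (v)
  (∀ i : ℤ, 1 ≤ i → i ≤ (n : ℤ) - 1 → D i * D ((n : ℤ) - i) ≠ D ((n : ℤ) - 1) →
    (∀ j : ℤ, 1 ≤ j → j < i → D j * D ((n : ℤ) - j) = D ((n : ℤ) - 1)) → D i = 1) ∧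
  -- (vi)
  (2 < n → A 2 ≠ B 2 → A 2 = 1) ∧
  (2 < n → A 2 = B 2 → A ((n : ℤ) - 1) = 1 ∧ B ((n : ℤ) - 1) = -1)

-- involution lemmas
lemma negSeq_negSeq (a : BSeq) : negSeq (negSeq a) = a := by
  funext i; simp [negSeq]

lemma revSeq_revSeq (m : ℕ) (a : BSeq) : revSeq m (revSeq m a) = a := by
  funext i; simp only [revSeq]; congr 1; ring

lemma altSeq_altSeq (a : BSeq) : altSeq (altSeq a) = a := by
  funext i; simp only [altSeq]; by_cases h : Even i <;> simp [h]

lemma revSeq_negSeq (m : ℕ) (a : BSeq) : revSeq m (negSeq a) = negSeq (revSeq m a) := rfl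

lemma altSeq_negSeq (a : BSeq) : altSeq (negSeq a) = negSeq (altSeq a) := by
  funext i; simp only [altSeq, negSeq]; by_cases h : Even i <;> simp [h]

lemma altSeq_revSeq_even {n : ℕ} (hn : Even n) (a : BSeq) :
    altSeq (revSeq n a) = negSeq (revSeq n (altSeq a)) := by
  funext i
  have hpar : Even ((n:ℤ) + 1 - i) ↔ ¬ Even i := by
    obtain ⟨k, hk⟩ := hn
    constructor
    · rintro ⟨l, hl⟩ h2; obtain ⟨p, hp⟩ := h2; omega
    · intro h2; rw [Int.not_even_iff_odd] at h2; obtain ⟨l, hl⟩ := h2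
      exact ⟨(k:ℤ) - l, by push_cast; omega⟩
  by_cases h : Even i <;> simp [altSeq, negSeq, revSeq, hpar, h]

lemma altSeq_revSeq_odd {m : ℕ} (hm : ¬ Even m) (a : BSeq) :
    altSeq (revSeq m a) = revSeq m (altSeq a) := by
  funext i
  have hpar : Even ((m:ℤ) + 1 - i) ↔ Even i := by
    rw [Nat.not_even_iff_odd] at hm; obtain ⟨k, hk⟩ := hm
    constructor
    · rintro ⟨l, hl⟩; exact ⟨(k:ℤ) + 1 - l, by push_cast; omega⟩
    · rintro ⟨l, hl⟩; exact ⟨(k:ℤ) + 1 - l, by push_cast; omega⟩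
  by_cases h : Even i <;> simp [altSeq, negSeq, revSeq, hpar, h]

-- NAC lemmas
def flipEquiv (c : ℤ) : ℤ ≃ ℤ :=
  ⟨fun j => c - j, fun j => c - j, fun j => by simp, fun j => by simp⟩

lemma NAC_neg (a : BSeq) (i : ℤ) : NAC (negSeq a) i = NAC a i := by
  unfold NAC; apply finsum_congr; intro j; simp [negSeq]

lemma NAC_rev (m : ℕ) (a : BSeq) (i : ℤ) : NAC (revSeq m a) i = NAC a i := by
  unfold NAC
  rw [← finsum_comp_equiv (flipEquiv ((m:ℤ) + 1 - i))]
  apply finsum_congr; intro j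
  simp only [flipEquiv, Equiv.coe_fn_mk, revSeq]
  rw [show (m:ℤ) + 1 - ((m:ℤ) + 1 - i - j) = i + j by ring,
      show (m:ℤ) + 1 - (i + ((m:ℤ) + 1 - i - j)) = j by ring, mul_comm]

lemma NAC_alt (a : BSeq) (i : ℤ) :
    NAC (altSeq a) i = if Even i then NAC a i else -NAC a i := by
  by_cases hi : Even i
  · rw [if_pos hi]; unfold NAC; apply finsum_congr; intro j
    have : Even (i + j) ↔ Even j := by
      constructor
      · intro h; have := Int.even_sub.mpr (iff_of_true h hi : Even (i+j) ↔ Even i); simpa using (Int.even_add.mp h).mp hi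
      · intro h; exact Int.even_add.mpr (iff_of_true hi h)
    by_cases hj : Even j <;> simp [altSeq, hj, this, hi]
  · rw [if_neg hi]
    have : ∀ j : ℤ, altSeq a j * altSeq a (i + j) = -(a j * a (i + j)) := by
      intro j
      have hpar : Even (i + j) ↔ ¬ Even j := by
        constructor
        · intro h hj; exact hi (by simpa using Int.even_add.mp h |>.mpr hj)
        · intro hj
          rw [Int.not_even_iff_odd] at hi hj
          obtain ⟨k, hk⟩ := hi; obtain ⟨l, hl⟩ := hj; exact ⟨k + l + 1, by omega⟩
      by_cases hj : Even j <;> simp [altSeq, hj, hpar, mul_comm] <;> ring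
    unfold NAC
    rw [← finsum_neg_distrib]
    apply finsum_congr; intro j; rw [this j]

lemma NAC_eq_zero_of_ge {m : ℕ} {a : BSeq} (hb : IsBinarySeq m a) {i : ℤ}
    (hi : (m : ℤ) ≤ i) : NAC a i = 0 := by
  unfold NAC
  apply finsum_eq_zero_of_forall_eq_zero
  intro j
  rcases lt_or_ge j 1 with h | h
  · rw [hb.2 j (Or.inl h), zero_mul]
  · rw [hb.2 (i + j) (Or.inr (by omega)), mul_zero]

lemma NAC_top {m : ℕ} {a : BSeq} (hb : IsBinarySeq m a) (hm : 1 ≤ m) :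
    NAC a ((m : ℤ) - 1) = a 1 * a m := by
  unfold NAC
  rw [finsum_eq_single _ (1 : ℤ)]
  · rw [show (m:ℤ) - 1 + 1 = m by ring]
  · intro j hj
    rcases lt_or_ge j 1 with h | h
    · rw [hb.2 j (Or.inl h), zero_mul]
    · rw [hb.2 ((m:ℤ) - 1 + j) (Or.inr (by omega)), mul_zero]

lemma NAC_sub2 {m : ℕ} {a : BSeq} (hb : IsBinarySeq m a) (hm : 2 ≤ m) :
    NAC a ((m : ℤ) - 2) = a 1 * a ((m:ℤ) - 1) + a 2 * a m := by
  unfold NAC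
  rw [finsum_eq_finset_sum_of_support_subset _ (s := {1, 2})]
  · rw [Finset.sum_insert (by decide), Finset.sum_singleton,
      show (m:ℤ) - 2 + 1 = (m:ℤ) - 1 by ring, show (m:ℤ) - 2 + 2 = m by ring]
  · intro j hj
    simp only [Function.mem_support] at hj
    simp only [Finset.coe_insert, Finset.coe_singleton, Set.mem_insert_iff, Set.mem_singleton_iff]
    by_contra hc
    push_neg at hc
    rcases lt_or_ge j 1 with h | h
    · exact hj (by rw [hb.2 j (Or.inl h), zero_mul])
    · exact hj (by rw [hb.2 ((m:ℤ) - 2 + j) (Or.inr (by omega)), mul_zero])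



-- binarity preservation
lemma isBinary_neg {m : ℕ} {a : BSeq} (h : IsBinarySeq m a) : IsBinarySeq m (negSeq a) := by
  constructor
  · intro i h1 h2; rcases h.1 i h1 h2 with hh | hh <;> simp [negSeq, hh]
  · intro i hi; simp [negSeq, h.2 i hi]

lemma isBinary_rev {m : ℕ} {a : BSeq} (h : IsBinarySeq m a) : IsBinarySeq m (revSeq m a) := by
  constructor
  · intro i h1 h2; exact h.1 _ (by omega) (by omega)
  · intro i hi; exact h.2 _ (by omega)

lemma isBinary_alt {m : ℕ} {a : BSeq} (h : IsBinarySeq m a) : IsBinarySeq m (altSeq a) := by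
  constructor
  · intro i h1 h2
    rcases h.1 i h1 h2 with hh | hh <;> by_cases he : Even i <;> simp [altSeq, he, hh]
  · intro i hi; simp [altSeq, h.2 i hi]

-- IsTT preserved by elementary steps
lemma isTT_elemStep {n : ℕ} {P Q : SeqQuad} (hs : ElemStep n P Q)
    (h : IsTT n P.1 P.2.1 P.2.2.1 P.2.2.2) : IsTT n Q.1 Q.2.1 Q.2.2.1 Q.2.2.2 := by
  obtain ⟨hA, hB, hC, hD, hN⟩ := h
  cases hs with
  | negA A B C D => exact ⟨isBinary_neg hA, hB, hC, hD, fun i hi => by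
      simpa [NAC_neg] using hN i hi⟩
  | negB A B C D => exact ⟨hA, isBinary_neg hB, hC, hD, fun i hi => by
      simpa [NAC_neg] using hN i hi⟩
  | negC A B C D => exact ⟨hA, hB, isBinary_neg hC, hD, fun i hi => by
      simpa [NAC_neg] using hN i hi⟩
  | negD A B C D => exact ⟨hA, hB, hC, isBinary_neg hD, fun i hi => by
      simpa [NAC_neg] using hN i hi⟩
  | revA A B C D => exact ⟨isBinary_rev hA, hB, hC, hD, fun i hi => by
      simpa [NAC_rev] using hN i hi⟩
  | revB A B C D => exact ⟨hA, isBinary_rev hB, hC, hD, fun i hi => by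
      simpa [NAC_rev] using hN i hi⟩
  | revC A B C D => exact ⟨hA, hB, isBinary_rev hC, hD, fun i hi => by
      simpa [NAC_rev] using hN i hi⟩
  | revD A B C D => exact ⟨hA, hB, hC, isBinary_rev hD, fun i hi => by
      simpa [NAC_rev] using hN i hi⟩
  | alt A B C D =>
      refine ⟨isBinary_alt hA, isBinary_alt hB, isBinary_alt hC, isBinary_alt hD, fun i hi => ?_⟩
      have := hN i hi
      by_cases he : Even i <;> simp only [NAC_alt, he, if_true, if_false, if_pos, if_neg,
        not_false_iff] <;> [exact this; linarith]
  | swap A B C D => exact ⟨hB, hA, hC, hD, fun i hi => by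
      have := hN i hi; linarith⟩

lemma isTT_ttEquiv {n : ℕ} {P Q : SeqQuad} (hs : TTEquiv n P Q)
    (h : IsTT n P.1 P.2.1 P.2.2.1 P.2.2.2) : IsTT n Q.1 Q.2.1 Q.2.2.1 Q.2.2.2 := by
  induction hs with
  | refl => exact h
  | tail _ hstep ih => exact isTT_elemStep hstep ih

lemma elemStep_symm {n : ℕ} : Symmetric (ElemStep n) := by
  intro P Q hs
  cases hs with
  | negA A B C D => have := ElemStep.negA (n := n) (negSeq A) B C D; rwa [negSeq_negSeq] at this
  | negB A B C D => have := ElemStep.negB (n := n) A (negSeq B) C D; rwa [negSeq_negSeq] at this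
  | negC A B C D => have := ElemStep.negC (n := n) A B (negSeq C) D; rwa [negSeq_negSeq] at this
  | negD A B C D => have := ElemStep.negD (n := n) A B C (negSeq D); rwa [negSeq_negSeq] at this
  | revA A B C D => have := ElemStep.revA (n := n) (revSeq n A) B C D; rwa [revSeq_revSeq] at this
  | revB A B C D => have := ElemStep.revB (n := n) A (revSeq n B) C D; rwa [revSeq_revSeq] at this
  | revC A B C D => have := ElemStep.revC (n := n) A B (revSeq n C) D; rwa [revSeq_revSeq] at this
  | revD A B C D =>
      have := ElemStep.revD (n := n) A B C (revSeq (n-1) D); rwa [revSeq_revSeq] at this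
  | alt A B C D =>
      have := ElemStep.alt (n := n) (altSeq A) (altSeq B) (altSeq C) (altSeq D)
      rwa [altSeq_altSeq, altSeq_altSeq, altSeq_altSeq, altSeq_altSeq] at this
  | swap A B C D => exact ElemStep.swap B A C D

lemma ttEquiv_symm {n : ℕ} {P Q : SeqQuad} (h : TTEquiv n P Q) : TTEquiv n Q P :=
  (@Relation.ReflTransGen.symmetric _ (ElemStep n) ⟨fun _ _ hh => elemStep_symm hh⟩).symm _ _ h



-- key identities
lemma ident1 {n : ℕ} {A B C D : BSeq} (h : IsTT n A B C D) (hn : 2 ≤ n) :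
    A 1 * A (n:ℤ) + B 1 * B (n:ℤ) + 2 * (C 1 * C (n:ℤ)) = 0 := by
  obtain ⟨hA, hB, hC, hD, hN⟩ := h
  have h1 := hN ((n:ℤ) - 1) (by omega)
  have hcast : ((n - 1 : ℕ) : ℤ) = (n:ℤ) - 1 := by
    rw [Nat.cast_sub (by omega)]; norm_num
  have hDz : NAC D ((n:ℤ) - 1) = 0 := NAC_eq_zero_of_ge hD (by omega)
  rw [NAC_top hA (by omega), NAC_top hB (by omega), NAC_top hC (by omega), hDz] at h1
  linarith

lemma ident2 {n : ℕ} {A B C D : BSeq} (h : IsTT n A B C D) (hn : 4 ≤ n) :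
    (A 1 * A ((n:ℤ) - 1) + A 2 * A (n:ℤ)) + (B 1 * B ((n:ℤ) - 1) + B 2 * B (n:ℤ)) +
      2 * (C 1 * C ((n:ℤ) - 1) + C 2 * C (n:ℤ)) + 2 * (D 1 * D ((n:ℤ) - 1)) = 0 := by
  obtain ⟨hA, hB, hC, hD, hN⟩ := h
  have h1 := hN ((n:ℤ) - 2) (by omega)
  have hcast : ((n - 1 : ℕ) : ℤ) = (n:ℤ) - 1 := by
    rw [Nat.cast_sub (by omega)]; norm_num
  have hDtop : NAC D ((n:ℤ) - 2) = D 1 * D ((n:ℤ) - 1) := by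
    have := NAC_top hD (by omega)
    rw [hcast] at this
    rw [show (n:ℤ) - 2 = (n:ℤ) - 1 - 1 by ring, this]
  rw [NAC_sub2 hA (by omega), NAC_sub2 hB (by omega), NAC_sub2 hC (by omega), hDtop] at h1
  linarith

-- least index machinery
lemma exists_least {P : ℤ → Prop} {N : ℤ}
    (h : ∃ i, 1 ≤ i ∧ i ≤ N ∧ P i) :
    ∃ i, (1 ≤ i ∧ i ≤ N ∧ P i) ∧ ∀ j, 1 ≤ j → j < i → ¬ (P j) := by
  obtain ⟨i0, hi0, hmin⟩ := Int.exists_least_of_bdd (P := fun z => 1 ≤ z ∧ z ≤ N ∧ P z)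
    ⟨1, fun z hz => hz.1⟩ h
  refine ⟨i0, hi0, fun j h1 h2 hP => ?_⟩
  have hjN : j ≤ N := by omega
  have := hmin j ⟨h1, hjN, hP⟩
  omega

lemma least_unique {P : ℤ → Prop} {N i0 i : ℤ}
    (h0 : 1 ≤ i0 ∧ i0 ≤ N ∧ P i0) (hmin : ∀ j, 1 ≤ j → j < i0 → ¬ P j)
    (h1 : 1 ≤ i) (h2 : i ≤ N) (hP : P i) (hm : ∀ j, 1 ≤ j → j < i → ¬ P j) :
    i = i0 := by
  by_contra hne
  rcases lt_or_gt_of_ne hne with hlt | hgt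
  · exact hmin i h1 hlt hP
  · exact hm i0 h0.1 hgt h0.2.2



-- normal form of transformations
def trS (m : ℕ) (α e r : Bool) (s : BSeq) : BSeq :=
  (cond e negSeq id) ((cond r (revSeq m) id) ((cond α altSeq id) s))

lemma trS_negOut (m : ℕ) (α e r : Bool) (s : BSeq) :
    negSeq (trS m α e r s) = trS m α (!e) r s := by
  cases e <;> simp [trS, negSeq_negSeq]

lemma trS_revOut (m : ℕ) (α e r : Bool) (s : BSeq) :
    revSeq m (trS m α e r s) = trS m α e (!r) s := by
  cases e <;> cases r <;> simp [trS, revSeq_negSeq, revSeq_revSeq]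

lemma trS_altOut_even {m : ℕ} (hm : Even m) (α e r : Bool) (s : BSeq) :
    altSeq (trS m α e r s) = trS m (!α) (xor e r) r s := by
  cases α <;> cases e <;> cases r <;>
    simp [trS, altSeq_negSeq, altSeq_revSeq_even hm, altSeq_altSeq, negSeq_negSeq]

lemma trS_altOut_odd {m : ℕ} (hm : ¬ Even m) (α e r : Bool) (s : BSeq) :
    altSeq (trS m α e r s) = trS m (!α) e r s := by
  cases α <;> cases e <;> cases r <;>
    simp [trS, altSeq_negSeq, altSeq_revSeq_odd hm, altSeq_altSeq, negSeq_negSeq]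

def quadAct (n : ℕ) (sw α eA rA eB rB eC rC eD rD : Bool) (X : SeqQuad) : SeqQuad :=
  (trS n α eA rA (cond sw X.2.1 X.1), trS n α eB rB (cond sw X.1 X.2.1),
    trS n α eC rC X.2.2.1, trS (n-1) α eD rD X.2.2.2)

lemma orbit_descr {n : ℕ} (hn : 1 ≤ n) (hev : Even n) {X Y : SeqQuad}
    (h : TTEquiv n X Y) :
    ∃ sw α eA rA eB rB eC rC eD rD, Y = quadAct n sw α eA rA eB rB eC rC eD rD X := by
  have hodd : ¬ Even (n - 1) := by
    obtain ⟨k, hk⟩ := hev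
    rintro ⟨l, hl⟩; omega
  induction h with
  | refl =>
      exact ⟨false, false, false, false, false, false, false, false, false, false, rfl⟩
  | tail hprev hstep ih =>
      obtain ⟨sw, α, eA, rA, eB, rB, eC, rC, eD, rD, hY⟩ := ih
      cases hstep with
      | negA A B C D =>
          simp only [quadAct, Prod.mk.injEq] at hY
          obtain ⟨hA, hB, hC, hD⟩ := hY
          exact ⟨sw, α, !eA, rA, eB, rB, eC, rC, eD, rD, by
            simp only [quadAct, Prod.mk.injEq]
            exact ⟨by rw [hA, trS_negOut], hB, hC, hD⟩⟩
      | negB A B C D =>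
          simp only [quadAct, Prod.mk.injEq] at hY
          obtain ⟨hA, hB, hC, hD⟩ := hY
          exact ⟨sw, α, eA, rA, !eB, rB, eC, rC, eD, rD, by
            simp only [quadAct, Prod.mk.injEq]
            exact ⟨hA, by rw [hB, trS_negOut], hC, hD⟩⟩
      | negC A B C D =>
          simp only [quadAct, Prod.mk.injEq] at hY
          obtain ⟨hA, hB, hC, hD⟩ := hY
          exact ⟨sw, α, eA, rA, eB, rB, !eC, rC, eD, rD, by
            simp only [quadAct, Prod.mk.injEq]
            exact ⟨hA, hB, by rw [hC, trS_negOut], hD⟩⟩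
      | negD A B C D =>
          simp only [quadAct, Prod.mk.injEq] at hY
          obtain ⟨hA, hB, hC, hD⟩ := hY
          exact ⟨sw, α, eA, rA, eB, rB, eC, rC, !eD, rD, by
            simp only [quadAct, Prod.mk.injEq]
            exact ⟨hA, hB, hC, by rw [hD, trS_negOut]⟩⟩
      | revA A B C D =>
          simp only [quadAct, Prod.mk.injEq] at hY
          obtain ⟨hA, hB, hC, hD⟩ := hY
          exact ⟨sw, α, eA, !rA, eB, rB, eC, rC, eD, rD, by
            simp only [quadAct, Prod.mk.injEq]
            exact ⟨by rw [hA, trS_revOut], hB, hC, hD⟩⟩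
      | revB A B C D =>
          simp only [quadAct, Prod.mk.injEq] at hY
          obtain ⟨hA, hB, hC, hD⟩ := hY
          exact ⟨sw, α, eA, rA, eB, !rB, eC, rC, eD, rD, by
            simp only [quadAct, Prod.mk.injEq]
            exact ⟨hA, by rw [hB, trS_revOut], hC, hD⟩⟩
      | revC A B C D =>
          simp only [quadAct, Prod.mk.injEq] at hY
          obtain ⟨hA, hB, hC, hD⟩ := hY
          exact ⟨sw, α, eA, rA, eB, rB, eC, !rC, eD, rD, by
            simp only [quadAct, Prod.mk.injEq]
            exact ⟨hA, hB, by rw [hC, trS_revOut], hD⟩⟩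
      | revD A B C D =>
          simp only [quadAct, Prod.mk.injEq] at hY
          obtain ⟨hA, hB, hC, hD⟩ := hY
          exact ⟨sw, α, eA, rA, eB, rB, eC, rC, eD, !rD, by
            simp only [quadAct, Prod.mk.injEq]
            exact ⟨hA, hB, hC, by rw [hD, trS_revOut]⟩⟩
      | alt A B C D =>
          simp only [quadAct, Prod.mk.injEq] at hY
          obtain ⟨hA, hB, hC, hD⟩ := hY
          exact ⟨sw, !α, xor eA rA, rA, xor eB rB, rB, xor eC rC, rC, eD, rD, by
            simp only [quadAct, Prod.mk.injEq]
            exact ⟨by rw [hA, trS_altOut_even hev], by rw [hB, trS_altOut_even hev],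
              by rw [hC, trS_altOut_even hev], by rw [hD, trS_altOut_odd hodd]⟩⟩
      | swap A B C D =>
          simp only [quadAct, Prod.mk.injEq] at hY
          obtain ⟨hA, hB, hC, hD⟩ := hY
          refine ⟨!sw, α, eB, rB, eA, rA, eC, rC, eD, rD, by
            simp only [quadAct, Prod.mk.injEq]
            refine ⟨?_, ?_, hC, hD⟩ <;> cases sw
            · exact hB
            · exact hB
            · exact hA
            · exact hA⟩



-- canonical sub-conditions
def CondII (n : ℕ) (S : BSeq) : Prop :=
  ∀ i : ℤ, 1 ≤ i → i ≤ (n : ℤ) → S i ≠ S ((n : ℤ) + 1 - i) →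
    (∀ j : ℤ, 1 ≤ j → j < i → S j = S ((n : ℤ) + 1 - j)) → S i = 1

def CondIV (n : ℕ) (S : BSeq) : Prop :=
  ∀ i : ℤ, 1 ≤ i → i ≤ (n : ℤ) → S i = S ((n : ℤ) + 1 - i) →
    (∀ j : ℤ, 1 ≤ j → j < i → S j ≠ S ((n : ℤ) + 1 - j)) → S i = 1

def CondV (n : ℕ) (S : BSeq) : Prop :=
  ∀ i : ℤ, 1 ≤ i → i ≤ (n : ℤ) - 1 → S i * S ((n : ℤ) - i) ≠ S ((n : ℤ) - 1) →
    (∀ j : ℤ, 1 ≤ j → j < i → S j * S ((n : ℤ) - j) = S ((n : ℤ) - 1)) → S i = 1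

lemma rev_val (n : ℕ) (s : BSeq) (i : ℤ) : revSeq n s i = s ((n:ℤ) + 1 - i) := rfl

-- component rigidity lemma for A and B
lemma comp_sym {n : ℕ} {S : BSeq} (hb : IsBinarySeq n S)
    (h1 : S 1 = 1) (hii : CondII n S) {e r : Bool}
    (hY1 : trS n false e r S 1 = 1) (hYn : trS n false e r S (n:ℤ) = 1)
    (hYii : CondII n (trS n false e r S)) :
    trS n false e r S = S := by
  cases e
  · cases r
    · rfl
    · -- T = revSeq n S
      by_cases hex : ∃ i, 1 ≤ i ∧ i ≤ (n:ℤ) ∧ S i ≠ S ((n:ℤ) + 1 - i)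
      · obtain ⟨i0, ⟨hi01, hi0n, hi0P⟩, hmin⟩ := exists_least hex
        have hmin' : ∀ j : ℤ, 1 ≤ j → j < i0 → S j = S ((n:ℤ) + 1 - j) :=
          fun j hj1 hj2 => not_ne_iff.mp (hmin j hj1 hj2)
        have hSi0 : S i0 = 1 := hii i0 hi01 hi0n hi0P hmin'
        have hval : S ((n:ℤ) + 1 - i0) = -1 := by
          rcases hb.1 ((n:ℤ) + 1 - i0) (by omega) (by omega) with h | h
          · exact absurd (by rw [hSi0, h]) hi0P
          · exact h
        have key := hYii i0 hi01 hi0n ?_ ?_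
        · simp only [trS, cond, id, rev_val] at key
          rw [key] at hval; norm_num at hval
        · simp only [trS, cond, id, rev_val]
          rw [show (n:ℤ) + 1 - ((n:ℤ) + 1 - i0) = i0 by ring]
          exact fun hh => hi0P hh.symm
        · intro j hj1 hj2
          simp only [trS, cond, id, rev_val]
          rw [show (n:ℤ) + 1 - ((n:ℤ) + 1 - j) = j by ring]
          exact (hmin' j hj1 hj2).symm
      · push_neg at hex
        funext i
        show S ((n:ℤ) + 1 - i) = S i
        by_cases hr : 1 ≤ i ∧ i ≤ (n:ℤ)
        · exact (hex i hr.1 hr.2).symm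
        · rw [hb.2 i (by omega), hb.2 ((n:ℤ) + 1 - i) (by omega)]
  · exfalso
    cases r
    · simp only [trS, cond, id, negSeq, h1] at hY1; norm_num at hY1
    · simp only [trS, cond, id, negSeq, rev_val] at hYn
      rw [show (n:ℤ) + 1 - (n:ℤ) = 1 by ring, h1] at hYn; norm_num at hYn

-- component rigidity for C
lemma comp_C {n : ℕ} {S : BSeq} (hb : IsBinarySeq n S)
    (h1 : S 1 = 1) (hnn : S (n:ℤ) = -1) (hiv : CondIV n S) {e r : Bool}
    (hY1 : trS n false e r S 1 = 1)
    (hYiv : CondIV n (trS n false e r S)) :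
    trS n false e r S = S := by
  cases e
  · cases r
    · rfl
    · exfalso
      simp only [trS, cond, id, rev_val] at hY1
      rw [show (n:ℤ) + 1 - 1 = (n:ℤ) by ring, hnn] at hY1; norm_num at hY1
  · cases r
    · exfalso
      simp only [trS, cond, id, negSeq, h1] at hY1; norm_num at hY1
    · -- T = negSeq (revSeq n S)
      by_cases hex : ∃ i, 1 ≤ i ∧ i ≤ (n:ℤ) ∧ S i = S ((n:ℤ) + 1 - i)
      · exfalso
        obtain ⟨i0, ⟨hi01, hi0n, hi0P⟩, hmin⟩ := exists_least hex
        have hSi0 : S i0 = 1 := hiv i0 hi01 hi0n hi0P hmin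
        have key := hYiv i0 hi01 hi0n ?_ ?_
        · simp only [trS, cond, id, negSeq, rev_val] at key
          rw [← hi0P, hSi0] at key; norm_num at key
        · simp only [trS, cond, id, negSeq, rev_val]
          rw [show (n:ℤ) + 1 - ((n:ℤ) + 1 - i0) = i0 by ring, hi0P]
        · intro j hj1 hj2
          simp only [trS, cond, id, negSeq, rev_val]
          rw [show (n:ℤ) + 1 - ((n:ℤ) + 1 - j) = j by ring]
          intro hh
          exact hmin j hj1 hj2 (by linarith [hh])
      · push_neg at hex
        funext i
        show -S ((n:ℤ) + 1 - i) = S i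
        by_cases hr : 1 ≤ i ∧ i ≤ (n:ℤ)
        · rcases hb.1 i hr.1 hr.2 with h | h <;>
            rcases hb.1 ((n:ℤ) + 1 - i) (by omega) (by omega) with h' | h'
          · exact absurd (h.trans h'.symm) (hex i hr.1 hr.2)
          · simp [h, h']
          · simp [h, h']
          · exact absurd (h.trans h'.symm) (hex i hr.1 hr.2)
        · rw [hb.2 i (by omega), hb.2 ((n:ℤ) + 1 - i) (by omega)]; norm_num



-- component rigidity for D
lemma comp_D {n : ℕ} (hn : 2 ≤ n) (hev : Even n) {S : BSeq} (hb : IsBinarySeq (n-1) S)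
    (h1 : S 1 = 1) (hv : CondV n S) {e r : Bool}
    (hY1 : trS (n-1) false e r S 1 = 1)
    (hYv : CondV n (trS (n-1) false e r S)) :
    trS (n-1) false e r S = S := by
  have hcast : ((n - 1 : ℕ) : ℤ) = (n:ℤ) - 1 := by
    rw [Nat.cast_sub (by omega)]; norm_num
  have hrevval : ∀ i : ℤ, revSeq (n-1) S i = S ((n:ℤ) - i) := by
    intro i; rw [rev_val, hcast, show (n:ℤ) - 1 + 1 - i = (n:ℤ) - i by ring]
  have hbound : ∀ i : ℤ, i < 1 ∨ (n:ℤ) - 1 < i → S i = 0 := by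
    intro i hi; exact hb.2 i (by omega)
  have hbin : ∀ i : ℤ, 1 ≤ i → i ≤ (n:ℤ) - 1 → S i = 1 ∨ S i = -1 := by
    intro i hi1 hi2; exact hb.1 i hi1 (by omega)
  cases e
  · cases r
    · rfl
    · -- T = revSeq (n-1) S
      rcases hbin ((n:ℤ) - 1) (by omega) (by omega) with ht | ht
      · by_cases hex : ∃ i, 1 ≤ i ∧ i ≤ (n:ℤ) - 1 ∧ S i * S ((n:ℤ) - i) ≠ S ((n:ℤ) - 1)
        · exfalso
          obtain ⟨i0, ⟨hi01, hi0n, hi0P⟩, hmin⟩ := exists_least hex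
          have hmin' : ∀ j : ℤ, 1 ≤ j → j < i0 → S j * S ((n:ℤ) - j) = S ((n:ℤ) - 1) :=
            fun j hj1 hj2 => not_ne_iff.mp (hmin j hj1 hj2)
          have hSi0 : S i0 = 1 := hv i0 hi01 hi0n hi0P hmin'
          have hval : S ((n:ℤ) - i0) = -1 := by
            rcases hbin ((n:ℤ) - i0) (by omega) (by omega) with h | h
            · exact absurd (by rw [hSi0, h, ht]; norm_num) hi0P
            · exact h
          have key := hYv i0 hi01 hi0n ?_ ?_
          · simp only [trS, cond, id] at key
            rw [hrevval] at key
            rw [key] at hval; norm_num at hval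
          · simp only [trS, cond, id]
            rw [hrevval, hrevval, hrevval,
              show (n:ℤ) - ((n:ℤ) - i0) = i0 by ring,
              show (n:ℤ) - ((n:ℤ) - 1) = 1 by ring, h1, mul_comm]
            rw [ht] at hi0P
            exact hi0P
          · intro j hj1 hj2
            simp only [trS, cond, id]
            rw [hrevval, hrevval, hrevval,
              show (n:ℤ) - ((n:ℤ) - j) = j by ring,
              show (n:ℤ) - ((n:ℤ) - 1) = 1 by ring, h1, mul_comm]
            rw [hmin' j hj1 hj2, ht]
        · push_neg at hex
          funext i
          show revSeq (n-1) S i = S i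
          rw [hrevval]
          by_cases hr : 1 ≤ i ∧ i ≤ (n:ℤ) - 1
          · have hp := hex i hr.1 hr.2
            rw [ht] at hp
            rcases hbin i hr.1 hr.2 with h | h <;>
              rcases hbin ((n:ℤ) - i) (by omega) (by omega) with h' | h' <;>
              rw [h, h'] at hp ⊢ <;> norm_num at hp
          · rw [hbound i (by omega), hbound ((n:ℤ) - i) (by omega)]
      · exfalso
        simp only [trS, cond, id] at hY1
        rw [hrevval, show (n:ℤ) - 1 = (n:ℤ) - 1 by ring, ht] at hY1
        norm_num at hY1
  · cases r
    · exfalso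
      simp only [trS, cond, id, negSeq, h1] at hY1; norm_num at hY1
    · -- T = negSeq (revSeq (n-1) S)
      exfalso
      have hTval : ∀ i : ℤ, trS (n-1) false true true S i = -S ((n:ℤ) - i) := by
        intro i; simp only [trS, cond, id, negSeq]; rw [hrevval]
      have ht : S ((n:ℤ) - 1) = -1 := by
        rcases hbin ((n:ℤ) - 1) (by omega) (by omega) with h | h
        · rw [hTval 1, show (n:ℤ) - 1 = (n:ℤ) - 1 by ring, h] at hY1; norm_num at hY1
        · exact h
      obtain ⟨k, hk⟩ := hev
      have hk1 : 1 ≤ k := by omega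
      have hkval : S (k:ℤ) * S ((n:ℤ) - (k:ℤ)) = 1 := by
        have : (n:ℤ) - (k:ℤ) = (k:ℤ) := by rw [hk]; push_cast; ring
        rw [this]
        rcases hbin (k:ℤ) (by exact_mod_cast hk1) (by rw [hk]; push_cast; omega) with h | h <;>
          rw [h] <;> norm_num
      have hex : ∃ i, 1 ≤ i ∧ i ≤ (n:ℤ) - 1 ∧ S i * S ((n:ℤ) - i) ≠ S ((n:ℤ) - 1) := by
        refine ⟨(k:ℤ), by exact_mod_cast hk1, by rw [hk]; push_cast; omega, ?_⟩
        rw [hkval, ht]; norm_num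
      obtain ⟨i0, ⟨hi01, hi0n, hi0P⟩, hmin⟩ := exists_least hex
      have hmin' : ∀ j : ℤ, 1 ≤ j → j < i0 → S j * S ((n:ℤ) - j) = S ((n:ℤ) - 1) :=
        fun j hj1 hj2 => not_ne_iff.mp (hmin j hj1 hj2)
      have hSi0 : S i0 = 1 := hv i0 hi01 hi0n hi0P hmin'
      have hval : S ((n:ℤ) - i0) = 1 := by
        rcases hbin ((n:ℤ) - i0) (by omega) (by omega) with h | h
        · exact h
        · exact absurd (by rw [hSi0, h, ht]; norm_num) hi0P
      have key := hYv i0 hi01 hi0n ?_ ?_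
      · rw [hTval] at key
        rw [hval] at key; norm_num at key
      · rw [hTval, hTval, hTval,
          show (n:ℤ) - ((n:ℤ) - i0) = i0 by ring,
          show (n:ℤ) - ((n:ℤ) - 1) = 1 by ring, h1, neg_mul_neg, mul_comm, hSi0, hval]
        norm_num
      · intro j hj1 hj2
        rw [hTval, hTval, hTval,
          show (n:ℤ) - ((n:ℤ) - j) = j by ring,
          show (n:ℤ) - ((n:ℤ) - 1) = 1 by ring, h1, neg_mul_neg, mul_comm, hmin' j hj1 hj2]
        exact ht



lemma trS_end_prod {n : ℕ} (hn : 1 ≤ n) (hev : Even n) (α e r : Bool) (s : BSeq) :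
    trS n α e r s 1 * trS n α e r s (n:ℤ) = (cond α (-1) 1) * (s 1 * s (n:ℤ)) := by
  have h1e : ¬ Even (1:ℤ) := by decide
  have hne : Even (n:ℤ) := (Int.even_coe_nat n).mpr hev
  cases α <;> cases e <;> cases r <;>
    simp [trS, negSeq, rev_val, altSeq, h1e, hne,
      show (n:ℤ) + 1 - 1 = (n:ℤ) from by ring, show (n:ℤ) + 1 - (n:ℤ) = 1 from by ring] <;>
    ring

lemma quadAct_fix {n : ℕ} (hn : 2 ≤ n) (hev : Even n) {A B C D : BSeq}
    (hTT : IsTT n A B C D) (hX : IsCanonical n A B C D)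
    (sw α eA rA eB rB eC rC eD rD : Bool)
    (hYc : IsCanonical n (quadAct n sw α eA rA eB rB eC rC eD rD (A,B,C,D)).1
      (quadAct n sw α eA rA eB rB eC rC eD rD (A,B,C,D)).2.1
      (quadAct n sw α eA rA eB rB eC rC eD rD (A,B,C,D)).2.2.1
      (quadAct n sw α eA rA eB rB eC rC eD rD (A,B,C,D)).2.2.2) :
    quadAct n sw α eA rA eB rB eC rC eD rD (A,B,C,D) = (A,B,C,D) := by
  obtain ⟨⟨hA1, hAn, hB1, hBn, hC1, hD1i⟩, hAii, hBii, hCiv, hDv, hvi1, hvi2⟩ := hX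
  have hD1 : D 1 = 1 := hD1i hn
  have hCn : C (n:ℤ) = -1 := by
    have h := ident1 hTT hn
    rw [hA1, hAn, hB1, hBn, hC1] at h
    linarith
  have hn1 : 1 ≤ n := by omega
  cases sw
  · simp only [quadAct, cond] at hYc ⊢
    obtain ⟨⟨hY1A, hYnA, hY1B, hYnB, hY1C, hY1D⟩, hYii, hYiii, hYiv, hYv, hYvi1, hYvi2⟩ := hYc
    cases α
    · rw [comp_sym hTT.1 hA1 hAii hY1A hYnA hYii,
        comp_sym hTT.2.1 hB1 hBii hY1B hYnB hYiii,
        comp_C hTT.2.2.1 hC1 hCn hCiv hY1C hYiv,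
        comp_D hn hev hTT.2.2.2.1 hD1 hDv (hY1D hn) hYv]
    · exfalso
      have hp := trS_end_prod hn1 hev true eA rA A
      rw [hY1A, hYnA, hA1, hAn] at hp
      norm_num at hp
  · simp only [quadAct, cond] at hYc ⊢
    obtain ⟨⟨hY1A, hYnA, hY1B, hYnB, hY1C, hY1D⟩, hYii, hYiii, hYiv, hYv, hYvi1, hYvi2⟩ := hYc
    cases α
    · rw [comp_sym hTT.2.1 hB1 hBii hY1A hYnA hYii,
        comp_sym hTT.1 hA1 hAii hY1B hYnB hYiii,
        comp_C hTT.2.2.1 hC1 hCn hCiv hY1C hYiv,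
        comp_D hn hev hTT.2.2.2.1 hD1 hDv (hY1D hn) hYv]
      by_cases hn2 : 2 < n
      · exfalso
        by_cases hab : A 2 = B 2
        · obtain ⟨hAn1, hBn1⟩ := hvi2 hn2 hab
          have := (hYvi2 hn2 ?_).1
          · rw [comp_sym hTT.2.1 hB1 hBii hY1A hYnA hYii] at this
            rw [this] at hBn1; norm_num at hBn1
          · rw [comp_sym hTT.2.1 hB1 hBii hY1A hYnA hYii,
              comp_sym hTT.1 hA1 hAii hY1B hYnB hYiii]
            exact hab.symm
        · have hA2 : A 2 = 1 := hvi1 hn2 hab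
          have hB2 : B 2 = 1 := by
            have := hYvi1 hn2 ?_
            · rwa [comp_sym hTT.2.1 hB1 hBii hY1A hYnA hYii] at this
            · rw [comp_sym hTT.2.1 hB1 hBii hY1A hYnA hYii,
                comp_sym hTT.1 hA1 hAii hY1B hYnB hYiii]
              exact fun hh => hab hh.symm
          exact hab (hA2.trans hB2.symm)
      · have hn2' : n = 2 := by omega
        subst hn2'
        have hAB : A = B := by
          funext i
          by_cases hr : 1 ≤ i ∧ i ≤ (2:ℤ)
          · have : i = 1 ∨ i = 2 := by omega
            rcases this with h | h <;> subst h
            · rw [hA1, hB1]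
            · have h2 : ((2:ℕ):ℤ) = 2 := by norm_num
              rw [← h2, hAn, hBn]
          · rw [hTT.1.2 i (by push_cast; omega), hTT.2.1.2 i (by push_cast; omega)]
        rw [hAB]
    · exfalso
      have hp := trS_end_prod hn1 hev true eA rA B
      rw [hY1A, hYnA, hB1, hBn] at hp
      norm_num at hp



-- existence machinery
def CondI (n : ℕ) (A B C D : BSeq) : Prop :=
  A 1 = 1 ∧ A (n:ℤ) = 1 ∧ B 1 = 1 ∧ B (n:ℤ) = 1 ∧ C 1 = 1 ∧ C (n:ℤ) = -1 ∧ D 1 = 1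

lemma alt_val1 (s : BSeq) : altSeq s 1 = s 1 := by
  simp [altSeq, (by decide : ¬ Even (1:ℤ))]

lemma alt_valn {n : ℕ} (hev : Even n) (s : BSeq) : altSeq s (n:ℤ) = -s (n:ℤ) := by
  simp [altSeq, (Int.even_coe_nat n).mpr hev]

lemma negA_fix {n : ℕ} {A B C D : BSeq} (hTT : IsTT n A B C D)
    (hb : A 1 = 1 ∨ A 1 = -1) (hp : A 1 * A (n:ℤ) = 1) :
    ∃ A', TTEquiv n (A,B,C,D) (A',B,C,D) ∧ IsTT n A' B C D ∧ A' 1 = 1 ∧ A' (n:ℤ) = 1 := by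
  rcases hb with h | h
  · exact ⟨A, .refl, hTT, h, by rw [h, one_mul] at hp; exact hp⟩
  · refine ⟨negSeq A, .single (ElemStep.negA A B C D), isTT_elemStep (ElemStep.negA A B C D) hTT, ?_, ?_⟩
    · simp [negSeq, h]
    · rw [h] at hp; simp [negSeq]; linarith
lemma negB_fix {n : ℕ} {A B C D : BSeq} (hTT : IsTT n A B C D)
    (hb : B 1 = 1 ∨ B 1 = -1) (hp : B 1 * B (n:ℤ) = 1) :
    ∃ B', TTEquiv n (A,B,C,D) (A,B',C,D) ∧ IsTT n A B' C D ∧ B' 1 = 1 ∧ B' (n:ℤ) = 1 := by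
  rcases hb with h | h
  · exact ⟨B, .refl, hTT, h, by rw [h, one_mul] at hp; exact hp⟩
  · refine ⟨negSeq B, .single (ElemStep.negB A B C D), isTT_elemStep (ElemStep.negB A B C D) hTT, ?_, ?_⟩
    · simp [negSeq, h]
    · rw [h] at hp; simp [negSeq]; linarith
lemma negC_fix {n : ℕ} {A B C D : BSeq} (hTT : IsTT n A B C D)
    (hb : C 1 = 1 ∨ C 1 = -1) (hp : C 1 * C (n:ℤ) = -1) :
    ∃ C', TTEquiv n (A,B,C,D) (A,B,C',D) ∧ IsTT n A B C' D ∧ C' 1 = 1 ∧ C' (n:ℤ) = -1 := by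
  rcases hb with h | h
  · exact ⟨C, .refl, hTT, h, by rw [h, one_mul] at hp; exact hp⟩
  · refine ⟨negSeq C, .single (ElemStep.negC A B C D), isTT_elemStep (ElemStep.negC A B C D) hTT, ?_, ?_⟩
    · simp [negSeq, h]
    · rw [h] at hp; simp [negSeq]; linarith
lemma negD_fix {n : ℕ} {A B C D : BSeq} (hTT : IsTT n A B C D)
    (hb : D 1 = 1 ∨ D 1 = -1) :
    ∃ D', TTEquiv n (A,B,C,D) (A,B,C,D') ∧ IsTT n A B C D' ∧ D' 1 = 1 := by
  rcases hb with h | h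
  · exact ⟨D, .refl, hTT, h⟩
  · exact ⟨negSeq D, .single (ElemStep.negD A B C D),
      isTT_elemStep (ElemStep.negD A B C D) hTT, by simp [negSeq, h]⟩

lemma mul_pm {x y : ℤ} (hx : x = 1 ∨ x = -1) (hy : y = 1 ∨ y = -1) :
    x * y = 1 ∨ x * y = -1 := by
  rcases hx with h | h <;> rcases hy with h' | h' <;> rw [h, h'] <;> norm_num

lemma phase1 {n : ℕ} (hn : 2 ≤ n) (hev : Even n) {A B C D : BSeq} (hTT : IsTT n A B C D) :
    ∃ A' B' C' D', TTEquiv n (A,B,C,D) (A',B',C',D') ∧ IsTT n A' B' C' D' ∧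
      CondI n A' B' C' D' := by
  have hn1z : (1:ℤ) ≤ (n:ℤ) := by exact_mod_cast Nat.one_le_of_lt hn
  -- step 1: fix A's endpoint product via alternation
  obtain ⟨A₁, B₁, C₁, D₁, heq1, hTT1, hpA1⟩ :
      ∃ A₁ B₁ C₁ D₁, TTEquiv n (A,B,C,D) (A₁,B₁,C₁,D₁) ∧ IsTT n A₁ B₁ C₁ D₁ ∧
        A₁ 1 * A₁ (n:ℤ) = 1 := by
    have hbp : A 1 * A (n:ℤ) = 1 ∨ A 1 * A (n:ℤ) = -1 :=
      mul_pm (hTT.1.1 1 le_rfl hn1z) (hTT.1.1 (n:ℤ) hn1z le_rfl)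
    rcases hbp with hp | hp
    · exact ⟨A, B, C, D, .refl, hTT, hp⟩
    · refine ⟨altSeq A, altSeq B, altSeq C, altSeq D, .single (ElemStep.alt A B C D),
        isTT_elemStep (ElemStep.alt A B C D) hTT, ?_⟩
      rw [alt_val1, alt_valn hev, mul_neg, hp]; norm_num
  -- derive the endpoint products for B and C
  have heqn := ident1 hTT1 hn
  have hpB1 : B₁ 1 * B₁ (n:ℤ) = 1 ∧ C₁ 1 * C₁ (n:ℤ) = -1 := by
    have hy := mul_pm (hTT1.2.1.1 1 le_rfl hn1z) (hTT1.2.1.1 (n:ℤ) hn1z le_rfl)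
    have hz := mul_pm (hTT1.2.2.1.1 1 le_rfl hn1z) (hTT1.2.2.1.1 (n:ℤ) hn1z le_rfl)
    rcases hy with hy | hy <;> rcases hz with hz | hz
    · exfalso; rw [hpA1, hy, hz] at heqn; norm_num at heqn
    · exact ⟨hy, hz⟩
    · exfalso; rw [hpA1, hy, hz] at heqn; norm_num at heqn
    · exfalso; rw [hpA1, hy, hz] at heqn; norm_num at heqn
  -- negations
  obtain ⟨A₂, e2, t2, hA21, hA2n⟩ := negA_fix hTT1 (hTT1.1.1 1 le_rfl hn1z) hpA1
  obtain ⟨B₂, e3, t3, hB21, hB2n⟩ := negB_fix t2 (t2.2.1.1 1 le_rfl hn1z) hpB1.1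
  obtain ⟨C₂, e4, t4, hC21, hC2n⟩ := negC_fix t3 (t3.2.2.1.1 1 le_rfl hn1z) hpB1.2
  have hcast : ((n - 1 : ℕ) : ℤ) = (n:ℤ) - 1 := by
    rw [Nat.cast_sub (by omega)]; norm_num
  obtain ⟨D₂, e5, t5, hD21⟩ := negD_fix t4 (t4.2.2.2.1.1 1 le_rfl (by rw [hcast]; omega))
  exact ⟨A₂, B₂, C₂, D₂, heq1.trans (e2.trans (e3.trans (e4.trans e5))), t5,
    hA21, hA2n, hB21, hB2n, hC21, hC2n, hD21⟩



lemma fixII {n : ℕ} {S : BSeq} (hb : IsBinarySeq n S) :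
    ∃ r : Bool, CondII n (cond r (revSeq n S) S) := by
  by_cases hex : ∃ i, 1 ≤ i ∧ i ≤ (n:ℤ) ∧ S i ≠ S ((n:ℤ) + 1 - i)
  · obtain ⟨i0, ⟨hi01, hi0n, hi0P⟩, hmin⟩ := exists_least hex
    have hmin' : ∀ j : ℤ, 1 ≤ j → j < i0 → S j = S ((n:ℤ) + 1 - j) :=
      fun j hj1 hj2 => not_ne_iff.mp (hmin j hj1 hj2)
    rcases hb.1 i0 hi01 hi0n with hv | hv
    · refine ⟨false, fun i h1 h2 hne hm => ?_⟩
      have : i = i0 := least_unique (P := fun i => S i ≠ S ((n:ℤ) + 1 - i))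
        ⟨hi01, hi0n, hi0P⟩ hmin h1 h2 hne (fun j hj1 hj2 hP => hP (hm j hj1 hj2))
      show S i = 1
      rw [this, hv]
    · refine ⟨true, fun i h1 h2 hne hm => ?_⟩
      simp only [cond, rev_val] at hne hm ⊢
      rw [show (n:ℤ) + 1 - ((n:ℤ) + 1 - i) = i by ring] at hne
      have : i = i0 := least_unique (P := fun i => S i ≠ S ((n:ℤ) + 1 - i))
        ⟨hi01, hi0n, hi0P⟩ hmin h1 h2 (fun hh => hne hh.symm)
        (fun j hj1 hj2 hP => by
          have := hm j hj1 hj2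
          rw [show (n:ℤ) + 1 - ((n:ℤ) + 1 - j) = j by ring] at this
          exact hP this.symm)
      subst this
      rcases hb.1 ((n:ℤ) + 1 - i) (by omega) (by omega) with h | h
      · exact h
      · exact absurd (hv.trans h.symm) hi0P
  · refine ⟨false, fun i h1 h2 hne _ => absurd ⟨i, h1, h2, hne⟩ hex⟩

lemma fixIV {n : ℕ} {S : BSeq} (hb : IsBinarySeq n S) :
    ∃ r : Bool, CondIV n (cond r (negSeq (revSeq n S)) S) := by
  by_cases hex : ∃ i, 1 ≤ i ∧ i ≤ (n:ℤ) ∧ S i = S ((n:ℤ) + 1 - i)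
  · obtain ⟨i0, ⟨hi01, hi0n, hi0P⟩, hmin⟩ := exists_least hex
    rcases hb.1 i0 hi01 hi0n with hv | hv
    · refine ⟨false, fun i h1 h2 heq hm => ?_⟩
      have : i = i0 := least_unique (P := fun i => S i = S ((n:ℤ) + 1 - i))
        ⟨hi01, hi0n, hi0P⟩ hmin h1 h2 heq (fun j hj1 hj2 hP => (hm j hj1 hj2) hP)
      show S i = 1
      rw [this, hv]
    · refine ⟨true, fun i h1 h2 heq hm => ?_⟩
      simp only [cond, negSeq, rev_val] at heq hm ⊢
      rw [show (n:ℤ) + 1 - ((n:ℤ) + 1 - i) = i by ring] at heq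
      have heq' : S i = S ((n:ℤ) + 1 - i) := by linarith [neg_injective heq]
      have : i = i0 := least_unique (P := fun i => S i = S ((n:ℤ) + 1 - i))
        ⟨hi01, hi0n, hi0P⟩ hmin h1 h2 heq'
        (fun j hj1 hj2 hP => by
          have := hm j hj1 hj2
          rw [show (n:ℤ) + 1 - ((n:ℤ) + 1 - j) = j by ring] at this
          exact this (by rw [hP]))
      subst this
      rw [← hi0P, hv]; norm_num
  · refine ⟨false, fun i h1 h2 heq _ => absurd ⟨i, h1, h2, heq⟩ hex⟩

lemma fixV {n : ℕ} (hn : 2 ≤ n) {S : BSeq} (hb : IsBinarySeq (n-1) S) (h1 : S 1 = 1) :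
    ∃ D', (D' = S ∨ D' = revSeq (n-1) S ∨ D' = negSeq (revSeq (n-1) S)) ∧
      CondV n D' ∧ D' 1 = 1 := by
  have hcast : ((n - 1 : ℕ) : ℤ) = (n:ℤ) - 1 := by
    rw [Nat.cast_sub (by omega)]; norm_num
  have hrevval : ∀ i : ℤ, revSeq (n-1) S i = S ((n:ℤ) - i) := by
    intro i; rw [rev_val, hcast, show (n:ℤ) - 1 + 1 - i = (n:ℤ) - i by ring]
  have hbin : ∀ i : ℤ, 1 ≤ i → i ≤ (n:ℤ) - 1 → S i = 1 ∨ S i = -1 := by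
    intro i hi1 hi2; exact hb.1 i hi1 (by omega)
  by_cases hex : ∃ i, 1 ≤ i ∧ i ≤ (n:ℤ) - 1 ∧ S i * S ((n:ℤ) - i) ≠ S ((n:ℤ) - 1)
  · obtain ⟨i0, ⟨hi01, hi0n, hi0P⟩, hmin⟩ := exists_least hex
    have hmin' : ∀ j : ℤ, 1 ≤ j → j < i0 → S j * S ((n:ℤ) - j) = S ((n:ℤ) - 1) :=
      fun j hj1 hj2 => not_ne_iff.mp (hmin j hj1 hj2)
    rcases hbin i0 hi01 hi0n with hv | hv
    · refine ⟨S, Or.inl rfl, fun i h1' h2' hne hm => ?_, h1⟩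
      have : i = i0 := least_unique (P := fun i => S i * S ((n:ℤ) - i) ≠ S ((n:ℤ) - 1))
        ⟨hi01, hi0n, hi0P⟩ hmin h1' h2' hne (fun j hj1 hj2 hP => hP (hm j hj1 hj2))
      rw [this, hv]
    · rcases hbin ((n:ℤ) - 1) (by omega) (by omega) with ht | ht
      · -- reversal
        refine ⟨revSeq (n-1) S, Or.inr (Or.inl rfl), fun i h1' h2' hne hm => ?_, ?_⟩
        · simp only [hrevval] at hne hm ⊢
          have hne' : S i * S ((n:ℤ) - i) ≠ S ((n:ℤ) - 1) := by
            rw [show (n:ℤ) - ((n:ℤ) - i) = i by ring,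
              show (n:ℤ) - ((n:ℤ) - 1) = 1 by ring, h1, mul_comm] at hne
            rw [ht]; exact hne
          have : i = i0 := least_unique
            (P := fun i => S i * S ((n:ℤ) - i) ≠ S ((n:ℤ) - 1))
            ⟨hi01, hi0n, hi0P⟩ hmin h1' h2' hne'
            (fun j hj1 hj2 hP => hP (by
              have := hm j hj1 hj2
              rw [show (n:ℤ) - ((n:ℤ) - j) = j by ring,
                show (n:ℤ) - ((n:ℤ) - 1) = 1 by ring, h1, mul_comm] at this
              rw [ht]; exact this))
          rw [this]
          rcases hbin ((n:ℤ) - i0) (by omega) (by omega) with h | h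
          · exact h
          · exfalso; apply hi0P; rw [hv, h, ht]; norm_num
        · rw [hrevval]; exact ht
      · -- negation of reversal
        refine ⟨negSeq (revSeq (n-1) S), Or.inr (Or.inr rfl), fun i h1' h2' hne hm => ?_, ?_⟩
        · simp only [negSeq, hrevval] at hne hm ⊢
          have hne' : S i * S ((n:ℤ) - i) ≠ S ((n:ℤ) - 1) := by
            rw [show (n:ℤ) - ((n:ℤ) - i) = i by ring,
              show (n:ℤ) - ((n:ℤ) - 1) = 1 by ring, h1, neg_mul_neg, mul_comm] at hne
            rw [ht]; exact hne
          have : i = i0 := least_unique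
            (P := fun i => S i * S ((n:ℤ) - i) ≠ S ((n:ℤ) - 1))
            ⟨hi01, hi0n, hi0P⟩ hmin h1' h2' hne'
            (fun j hj1 hj2 hP => hP (by
              have := hm j hj1 hj2
              rw [show (n:ℤ) - ((n:ℤ) - j) = j by ring,
                show (n:ℤ) - ((n:ℤ) - 1) = 1 by ring, h1, neg_mul_neg,
                mul_comm] at this
              rw [ht]; exact this))
          rw [this]
          rcases hbin ((n:ℤ) - i0) (by omega) (by omega) with h | h
          · exfalso; apply hi0P; rw [hv, h, ht]; norm_num
          · rw [h]; norm_num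
        · simp only [negSeq]; rw [hrevval, ht]; norm_num
  · exact ⟨S, Or.inl rfl, fun i h1' h2' hne _ => absurd ⟨i, h1', h2', hne⟩ hex, h1⟩



lemma phase2 {n : ℕ} {A B C D : BSeq} (hTT : IsTT n A B C D) (hI : CondI n A B C D) :
    ∃ A', TTEquiv n (A,B,C,D) (A',B,C,D) ∧ IsTT n A' B C D ∧ CondI n A' B C D ∧
      CondII n A' := by
  obtain ⟨r, hr⟩ := fixII (S := A) hTT.1
  cases r
  · exact ⟨A, .refl, hTT, hI, hr⟩
  · refine ⟨revSeq n A, .single (ElemStep.revA A B C D),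
      isTT_elemStep (ElemStep.revA A B C D) hTT, ?_, hr⟩
    obtain ⟨h1, h2, rest⟩ := hI
    exact ⟨by rw [rev_val, show (n:ℤ) + 1 - 1 = (n:ℤ) by ring]; exact h2,
      by rw [rev_val, show (n:ℤ) + 1 - (n:ℤ) = 1 by ring]; exact h1, rest⟩

lemma phase3 {n : ℕ} {A B C D : BSeq} (hTT : IsTT n A B C D) (hI : CondI n A B C D)
    (hiiA : CondII n A) :
    ∃ B', TTEquiv n (A,B,C,D) (A,B',C,D) ∧ IsTT n A B' C D ∧ CondI n A B' C D ∧
      CondII n A ∧ CondII n B' := by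
  obtain ⟨r, hr⟩ := fixII (S := B) hTT.2.1
  cases r
  · exact ⟨B, .refl, hTT, hI, hiiA, hr⟩
  · refine ⟨revSeq n B, .single (ElemStep.revB A B C D),
      isTT_elemStep (ElemStep.revB A B C D) hTT, ?_, hiiA, hr⟩
    obtain ⟨h1, h2, h3, h4, rest⟩ := hI
    exact ⟨h1, h2, by rw [rev_val, show (n:ℤ) + 1 - 1 = (n:ℤ) by ring]; exact h4,
      by rw [rev_val, show (n:ℤ) + 1 - (n:ℤ) = 1 by ring]; exact h3, rest⟩

lemma phase4 {n : ℕ} {A B C D : BSeq} (hTT : IsTT n A B C D) (hI : CondI n A B C D)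
    (hiiA : CondII n A) (hiiB : CondII n B) :
    ∃ C', TTEquiv n (A,B,C,D) (A,B,C',D) ∧ IsTT n A B C' D ∧ CondI n A B C' D ∧
      CondII n A ∧ CondII n B ∧ CondIV n C' := by
  obtain ⟨r, hr⟩ := fixIV (S := C) hTT.2.2.1
  cases r
  · exact ⟨C, .refl, hTT, hI, hiiA, hiiB, hr⟩
  · refine ⟨negSeq (revSeq n C), (Relation.ReflTransGen.single (ElemStep.revC A B C D)).tail
      (ElemStep.negC A B (revSeq n C) D),
      isTT_elemStep (ElemStep.negC A B (revSeq n C) D)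
        (isTT_elemStep (ElemStep.revC A B C D) hTT), ?_, hiiA, hiiB, hr⟩
    obtain ⟨h1, h2, h3, h4, h5, h6, h7⟩ := hI
    refine ⟨h1, h2, h3, h4, ?_, ?_, h7⟩
    · show -(revSeq n C 1) = 1
      rw [rev_val, show (n:ℤ) + 1 - 1 = (n:ℤ) by ring, h6]; norm_num
    · show -(revSeq n C (n:ℤ)) = -1
      rw [rev_val, show (n:ℤ) + 1 - (n:ℤ) = 1 by ring, h5]

lemma phase5 {n : ℕ} (hn : 2 ≤ n) {A B C D : BSeq} (hTT : IsTT n A B C D)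
    (hI : CondI n A B C D) (hiiA : CondII n A) (hiiB : CondII n B) (hivC : CondIV n C) :
    ∃ D', TTEquiv n (A,B,C,D) (A,B,C,D') ∧ IsTT n A B C D' ∧ CondI n A B C D' ∧
      CondII n A ∧ CondII n B ∧ CondIV n C ∧ CondV n D' := by
  obtain ⟨D', hD', hvD', h1D'⟩ := fixV hn hTT.2.2.2.1 hI.2.2.2.2.2.2
  have hI' : CondI n A B C D' :=
    ⟨hI.1, hI.2.1, hI.2.2.1, hI.2.2.2.1, hI.2.2.2.2.1, hI.2.2.2.2.2.1, h1D'⟩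
  rcases hD' with h | h | h
  · exact ⟨D', by rw [h]; exact .refl, by rw [h]; exact hTT, hI', hiiA, hiiB, hivC, hvD'⟩
  · exact ⟨D', by rw [h]; exact .single (ElemStep.revD A B C D),
      by rw [h]; exact isTT_elemStep (ElemStep.revD A B C D) hTT,
      hI', hiiA, hiiB, hivC, hvD'⟩
  · exact ⟨D', by
      rw [h]
      exact (Relation.ReflTransGen.single (ElemStep.revD A B C D)).tail
        (ElemStep.negD A B C (revSeq (n-1) D)),
      by
        rw [h]
        exact isTT_elemStep (ElemStep.negD A B C (revSeq (n-1) D))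
          (isTT_elemStep (ElemStep.revD A B C D) hTT),
      hI', hiiA, hiiB, hivC, hvD'⟩

lemma phase6 {n : ℕ} (hn : 2 ≤ n) (hev : Even n) {A B C D : BSeq} (hTT : IsTT n A B C D)
    (hI : CondI n A B C D) (hiiA : CondII n A) (hiiB : CondII n B)
    (hivC : CondIV n C) (hvD : CondV n D) :
    ∃ A' B', TTEquiv n (A,B,C,D) (A',B',C,D) ∧ CondI n A' B' C D ∧
      CondII n A' ∧ CondII n B' ∧
      (2 < n → A' 2 ≠ B' 2 → A' 2 = 1) ∧
      (2 < n → A' 2 = B' 2 → A' ((n:ℤ) - 1) = 1 ∧ B' ((n:ℤ) - 1) = -1) := by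
  by_cases h2n : 2 < n
  · have hn4 : 4 ≤ n := by obtain ⟨k, hk⟩ := hev; omega
    have hn4z : (4:ℤ) ≤ (n:ℤ) := by exact_mod_cast hn4
    obtain ⟨hA1, hAn, hB1, hBn, hC1, hCn, hD1⟩ := hI
    have heq := ident2 hTT hn4
    rw [hA1, hAn, hB1, hBn, hC1, hCn, hD1] at heq
    have ha2 := hTT.1.1 2 (by norm_num) (by omega)
    have ha' := hTT.1.1 ((n:ℤ) - 1) (by omega) (by omega)
    have hb2 := hTT.2.1.1 2 (by norm_num) (by omega)
    have hb' := hTT.2.1.1 ((n:ℤ) - 1) (by omega) (by omega)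
    have hc2 := hTT.2.2.1.1 2 (by norm_num) (by omega)
    have hc' := hTT.2.2.1.1 ((n:ℤ) - 1) (by omega) (by omega)
    have hcast : ((n - 1 : ℕ) : ℤ) = (n:ℤ) - 1 := by
      rw [Nat.cast_sub (by omega)]; norm_num
    have hd' := hTT.2.2.2.1.1 ((n:ℤ) - 1) (by omega) (by rw [hcast])
    have hcases : (A 2 = A ((n:ℤ) - 1) ∧ B 2 ≠ B ((n:ℤ) - 1)) ∨
        (A 2 ≠ A ((n:ℤ) - 1) ∧ B 2 = B ((n:ℤ) - 1)) := by
      rcases ha2 with h1a | h1a <;> rcases ha' with h2a | h2a <;>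
        rcases hb2 with h1b | h1b <;> rcases hb' with h2b | h2b <;>
        rcases hc2 with h1c | h1c <;> rcases hc' with h2c | h2c <;>
        rcases hd' with h1d | h1d <;>
        rw [h1a, h2a, h1b, h2b, h1c, h2c, h1d] at heq <;>
        simp only [h1a, h2a, h1b, h2b] <;> norm_num <;> linarith
    have hminA : ∀ j : ℤ, 1 ≤ j → j < 2 → A j = A ((n:ℤ) + 1 - j) := by
      intro j hj1 hj2
      have : j = 1 := by omega
      subst this
      rw [show (n:ℤ) + 1 - 1 = (n:ℤ) by ring, hA1, hAn]
    have hminB : ∀ j : ℤ, 1 ≤ j → j < 2 → B j = B ((n:ℤ) + 1 - j) := by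
      intro j hj1 hj2
      have : j = 1 := by omega
      subst this
      rw [show (n:ℤ) + 1 - 1 = (n:ℤ) by ring, hB1, hBn]
    rcases hcases with ⟨hAsym, hBasym⟩ | ⟨hAasym, hBsym⟩
    · -- B is the asymmetric one at 2
      have hB2 : B 2 = 1 := hiiB 2 (by norm_num) (by omega)
        (by rw [show (n:ℤ) + 1 - 2 = (n:ℤ) - 1 by ring]; exact hBasym) hminB
      have hB' : B ((n:ℤ) - 1) = -1 := by
        rcases hb' with h | h
        · exfalso; apply hBasym; rw [hB2, h]
        · exact h
      rcases ha2 with hA2 | hA2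
      · -- no swap needed
        refine ⟨A, B, .refl, ⟨hA1, hAn, hB1, hBn, hC1, hCn, hD1⟩, hiiA, hiiB,
          fun _ _ => hA2, fun _ _ => ⟨by rw [← hAsym, hA2], hB'⟩⟩
      · -- swap
        refine ⟨B, A, .single (ElemStep.swap A B C D),
          ⟨hB1, hBn, hA1, hAn, hC1, hCn, hD1⟩, hiiB, hiiA,
          fun _ _ => hB2, fun _ habs => ?_⟩
        exfalso; rw [hB2, hA2] at habs; norm_num at habs
    · -- A is the asymmetric one at 2
      have hA2 : A 2 = 1 := hiiA 2 (by norm_num) (by omega)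
        (by rw [show (n:ℤ) + 1 - 2 = (n:ℤ) - 1 by ring]; exact hAasym) hminA
      have hA' : A ((n:ℤ) - 1) = -1 := by
        rcases ha' with h | h
        · exfalso; apply hAasym; rw [hA2, h]
        · exact h
      rcases hb2 with hB2 | hB2
      · -- swap
        refine ⟨B, A, .single (ElemStep.swap A B C D),
          ⟨hB1, hBn, hA1, hAn, hC1, hCn, hD1⟩, hiiB, hiiA,
          fun _ _ => ?_, fun _ habs => ⟨by rw [← hBsym, hB2], hA'⟩⟩
        exact hB2
      · -- no swap
        refine ⟨A, B, .refl, ⟨hA1, hAn, hB1, hBn, hC1, hCn, hD1⟩, hiiA, hiiB,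
          fun _ _ => hA2, fun _ habs => ?_⟩
        exfalso; rw [hA2, hB2] at habs; norm_num at habs
  · exact ⟨A, B, .refl, hI, hiiA, hiiB, fun h => absurd h h2n, fun h => absurd h h2n⟩


/-- For every even `n`, each equivalence class of Turyn-type sequences `TT(n)`
contains exactly one member in canonical form. -/
theorem unique_canonical_member (n : ℕ) (hn : 1 ≤ n) (hev : Even n) (A B C D : BSeq)
    (h : IsTT n A B C D) :
    ∃! T : SeqQuad, TTEquiv n (A, B, C, D) T ∧
      IsCanonical n T.1 T.2.1 T.2.2.1 T.2.2.2 := by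
  have hn2 : 2 ≤ n := by obtain ⟨k, hk⟩ := hev; omega
  obtain ⟨A1, B1, C1, D1, e1, t1, hI1⟩ := phase1 hn2 hev h
  obtain ⟨A2, e2, t2, hI2, hii2⟩ := phase2 t1 hI1
  obtain ⟨B3, e3, t3, hI3, hiiA3, hiiB3⟩ := phase3 t2 hI2 hii2
  obtain ⟨C4, e4, t4, hI4, hiiA4, hiiB4, hiv4⟩ := phase4 t3 hI3 hiiA3 hiiB3
  obtain ⟨D5, e5, t5, hI5, hiiA5, hiiB5, hiv5, hv5⟩ := phase5 hn2 t4 hI4 hiiA4 hiiB4 hiv4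
  obtain ⟨A6, B6, e6, hI6, hiiA6, hiiB6, hvi1, hvi2⟩ :=
    phase6 hn2 hev t5 hI5 hiiA5 hiiB5 hiv5 hv5
  have hreach : TTEquiv n (A, B, C, D) (A6, B6, C4, D5) :=
    e1.trans (e2.trans (e3.trans (e4.trans (e5.trans e6))))
  have hTTT : IsTT n A6 B6 C4 D5 := isTT_ttEquiv hreach h
  have hcanT : IsCanonical n A6 B6 C4 D5 :=
    ⟨⟨hI6.1, hI6.2.1, hI6.2.2.1, hI6.2.2.2.1, hI6.2.2.2.2.1,
      fun _ => hI6.2.2.2.2.2.2⟩, hiiA6, hiiB6, hiv5, hv5, hvi1, hvi2⟩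
  refine ⟨(A6, B6, C4, D5), ⟨hreach, hcanT⟩, ?_⟩
  rintro Y ⟨hreachY, hcanY⟩
  have hTY : TTEquiv n (A6, B6, C4, D5) Y := (ttEquiv_symm hreach).trans hreachY
  obtain ⟨sw, α, eA, rA, eB, rB, eC, rC, eD, rD, hYq⟩ := orbit_descr (by omega) hev hTY
  rw [hYq] at hcanY ⊢
  exact quadAct_fix hn2 hev hTTT hcanT sw α eA rA eB rB eC rC eD rD hcanY
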